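/- Let m, n ≥ 1, let G = G_{m×n} be the grid graph, let d = gcd(m+1, n+1), and let u = (a,b) be a vertex of G with d ∣ a or d ∣ b. Then there exists a vertex v adjacent to u in G such that the graph G − uv (the graph G with the single edge uv deleted) has an even kernel containing v. -/

import Mathlib

/-- P-positions of undirected edge geography on the edge set `F` with root `v`:
every move (removing an edge `s(v,w) ∈ F` and moving the root to `w`)
leads to a position that is not a P-position. -/
def UegPPos {V : Type} [DecidableEq V] (F : Finset (Sym2 V)) (v : V) : Prop :=
  ∀ w : V, ∀ h : s(v, w) ∈ F, ¬ UegPPos (F.erase s(v, w)) w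
termination_by F.card
decreasing_by exact Finset.card_erase_lt_of_mem h

/-- N-positions of undirected edge geography: some move leads to a P-position. -/
def UegNPos {V : Type} [DecidableEq V] (F : Finset (Sym2 V)) (v : V) : Prop :=
  ∃ w : V, ∃ _ : s(v, w) ∈ F, UegPPos (F.erase s(v, w)) w

/-- The grid graph `G_{m×n}`: the vertex `(i, j)` of the grid (with `1 ≤ i ≤ m`,
`1 ≤ j ≤ n`) is encoded as the pair `(⟨i-1, _⟩, ⟨j-1, _⟩) : Fin m × Fin n`;
two vertices `(i,j)` and `(i',j')` are adjacent iff `|i-i'| + |j-j'| = 1`. -/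
def gridGraph (m n : ℕ) : SimpleGraph (Fin m × Fin n) where
  Adj p q := ((p.1.val : ℤ) - q.1.val).natAbs + ((p.2.val : ℤ) - q.2.val).natAbs = 1
  symm := ⟨by intro p q h; omega⟩
  loopless := ⟨by intro p h; omega⟩

instance (m n : ℕ) : DecidableRel (gridGraph m n).Adj := fun p q =>
  inferInstanceAs
    (Decidable (((p.1.val : ℤ) - q.1.val).natAbs + ((p.2.val : ℤ) - q.2.val).natAbs = 1))

/-- An even kernel of a simple graph: a nonempty independent set `S` such that every
vertex not in `S` has an even number of neighbors in `S`. -/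
def IsEvenKernel {V : Type} (G : SimpleGraph V) (S : Set V) : Prop :=
  S.Nonempty ∧ (∀ u ∈ S, ∀ w ∈ S, ¬ G.Adj u w) ∧
    ∀ u, u ∉ S → Even {w | w ∈ S ∧ G.Adj u w}.ncard



open Polynomial

noncomputable def fpoly : ℕ → Polynomial (ZMod 2)
  | 0 => 0
  | 1 => 1
  | (k+2) => X * fpoly (k+1) + fpoly k

lemma fpoly_add : ∀ a b : ℕ, fpoly (a + b + 1) = fpoly (a+1) * fpoly (b+1) + fpoly a * fpoly b := by
  intro a
  induction a using Nat.strong_induction_on with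
  | _ a ih =>
    match a with
    | 0 => intro b; simp [fpoly]
    | 1 =>
      intro b
      rw [show (1:ℕ)+b+1 = b+2 from by omega,
        show fpoly (b+2) = X * fpoly (b+1) + fpoly b from rfl,
        show fpoly (1+1) = X from by rw [show (1:ℕ)+1 = 2 from rfl, show fpoly 2 = X * fpoly 1 + fpoly 0 from rfl, show fpoly 1 = 1 from rfl, show fpoly 0 = 0 from rfl]; ring,
        show fpoly 1 = 1 from rfl]
      ring
    | (a+2) =>
      intro b
      have h1 := ih (a+1) (by omega) b
      have h0 := ih a (by omega) b
      have e : a + 2 + b + 1 = (a + b + 1) + 2 := by omega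
      rw [e, fpoly]
      have e2 : a + b + 1 + 1 = (a+1) + b + 1 := by omega
      rw [e2, h1, h0]
      rw [show fpoly (a+1+2) = X * fpoly (a+1+1) + fpoly (a+1) from rfl,
        show fpoly (a+1+1) = X * fpoly (a+1-1+1) + fpoly (a+1-1) from ?_,
        show a+1-1 = a from by omega]
      · ring
      · rw [show a+1-1 = a from by omega]; rfl

lemma fpoly_coprime : ∀ a : ℕ, IsCoprime (fpoly a) (fpoly (a+1)) := by
  intro a
  induction a with
  | zero => simpa [fpoly] using isCoprime_one_right
  | succ a ih =>
    have : fpoly (a+2) = fpoly a + fpoly (a+1) * X := by rw [fpoly]; ring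
    rw [this]
    exact (ih.symm).add_mul_left_right X

lemma fpoly_dvd {d a : ℕ} (h : d ∣ a) : fpoly d ∣ fpoly a := by
  obtain ⟨t, rfl⟩ := h
  induction t with
  | zero => simp [fpoly]
  | succ t ih =>
    rcases Nat.eq_zero_or_pos d with rfl | hd
    · simp [fpoly]
    · have e : d * (t+1) = d * t + (d-1) + 1 := by
        have h : d * (t+1) = d * t + d := Nat.mul_succ d t; omega
      rw [e, fpoly_add]
      have e2 : d - 1 + 1 = d := by omega
      rw [e2]
      exact dvd_add (dvd_mul_left _ _) (ih.mul_right _)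

lemma fpoly_mul_add_mod (a : ℕ) (ha : 0 < a) : ∀ k r : ℕ, ∃ c : Polynomial (ZMod 2),
    fpoly (k*a + r) = fpoly (a-1)^k * fpoly r + c * fpoly a := by
  intro k
  induction k with
  | zero => intro r; exact ⟨0, by simp⟩
  | succ k ih =>
    intro r
    obtain ⟨c, hc⟩ := ih r
    have e : (k+1)*a + r = (k*a + r) + (a-1) + 1 := by
      have : 1 ≤ a := ha; ring_nf; omega
    refine ⟨fpoly (k*a+r+1) + c * fpoly (a-1), ?_⟩
    rw [e, fpoly_add, show a - 1 + 1 = a from by omega, hc]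
    ring

lemma fpoly_mod (a b : ℕ) (ha : 0 < a) : ∃ γ δ : Polynomial (ZMod 2),
    fpoly (b % a) = γ * fpoly a + δ * fpoly b := by
  obtain ⟨c, hc⟩ := fpoly_mul_add_mod a ha (b / a) (b % a)
  have ediv : b / a * a + b % a = b := by rw [Nat.mul_comm]; exact Nat.div_add_mod b a
  rw [ediv] at hc
  have hcop : IsCoprime (fpoly (a-1) ^ (b/a)) (fpoly a) := by
    have := fpoly_coprime (a-1)
    rw [show a - 1 + 1 = a from by omega] at this
    exact this.pow_left
  obtain ⟨u, v, huv⟩ := hcop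
  -- u * fpoly(a-1)^(b/a) + v * fpoly a = 1
  refine ⟨v * fpoly (b % a) - u * c, u, ?_⟩
  have h1 : fpoly (b % a) = (u * fpoly (a-1)^(b/a) + v * fpoly a) * fpoly (b % a) := by
    rw [huv]; ring
  have h2 : fpoly (a-1)^(b/a) * fpoly (b % a) = fpoly b - c * fpoly a := by
    rw [hc]; ring
  calc fpoly (b % a) = (u * fpoly (a-1)^(b/a) + v * fpoly a) * fpoly (b % a) := h1
    _ = u * (fpoly (a-1)^(b/a) * fpoly (b % a)) + v * fpoly a * fpoly (b % a) := by ring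
    _ = u * (fpoly b - c * fpoly a) + v * fpoly a * fpoly (b % a) := by rw [h2]
    _ = (v * fpoly (b % a) - u * c) * fpoly a + u * fpoly b := by ring

lemma fpoly_bezout : ∀ a b : ℕ, ∃ α β : Polynomial (ZMod 2),
    fpoly (Nat.gcd a b) = α * fpoly a + β * fpoly b := by
  intro a b
  induction a, b using Nat.gcd.induction with
  | H0 n => exact ⟨0, 1, by simp⟩
  | H1 a b ha ih =>
    obtain ⟨α, β, h⟩ := ih
    rw [Nat.gcd_rec]
    obtain ⟨γ, δ, hg⟩ := fpoly_mod a b ha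
    exact ⟨α * γ + β, α * δ, by rw [h, hg]; ring⟩def pathT (n : ℕ) : (ℕ → ZMod 2) →ₗ[ZMod 2] (ℕ → ZMod 2) where
  toFun v := fun k => if 1 ≤ k ∧ k ≤ n then v (k-1) + v (k+1) else 0
  map_add' x y := by funext k; by_cases h : 1 ≤ k ∧ k ≤ n <;> simp [h] <;> ring
  map_smul' c x := by funext k; by_cases h : 1 ≤ k ∧ k ≤ n <;> simp [h] <;> ring

def een (j : ℕ) : ℕ → ZMod 2 := fun k => if k = j then 1 else 0

lemma pathT_apply (n : ℕ) (v : ℕ → ZMod 2) (k : ℕ) :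
    pathT n v k = if 1 ≤ k ∧ k ≤ n then v (k-1) + v (k+1) else 0 := rfl

lemma pathT_een (n j : ℕ) (hj1 : 1 ≤ j) (hj2 : j ≤ n) :
    pathT n (een j) = (if 2 ≤ j then een (j-1) else 0) + (if j+1 ≤ n then een (j+1) else 0) := by
  funext k
  simp only [pathT_apply, een, Pi.add_apply, ite_apply, Pi.zero_apply]
  split_ifs <;> first | rfl | omega | (exfalso; omega) | decide | simp_all

lemma aeval_two_step (n k : ℕ) (v : ℕ → ZMod 2) :
    aeval (pathT n) (fpoly (k+2)) v = pathT n (aeval (pathT n) (fpoly (k+1)) v)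
      + aeval (pathT n) (fpoly k) v := by
  rw [show fpoly (k+2) = X * fpoly (k+1) + fpoly k from rfl, map_add, map_mul, aeval_X]
  rfl

lemma aeval_fpoly_een (n : ℕ) (hn : 1 ≤ n) :
    ∀ k, 1 ≤ k → k ≤ n + 1 →
      aeval (pathT n) (fpoly k) (een 1) = if k ≤ n then een k else 0 := by
  intro k
  induction k using Nat.strong_induction_on with
  | _ k ih =>
    match k with
    | 0 => intro h _; exact absurd h (by omega)
    | 1 => intro _ _; rw [show fpoly 1 = 1 from rfl, map_one]; simp [hn]
    | 2 =>
      intro _ h2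
      rw [show fpoly 2 = X from by
            rw [show fpoly 2 = X * fpoly 1 + fpoly 0 from rfl,
              show fpoly 1 = 1 from rfl, show fpoly 0 = 0 from rfl]; ring,
        aeval_X]
      have h := pathT_een n 1 le_rfl hn
      rw [if_neg (by omega)] at h
      show pathT n (een 1) = _
      rw [h, zero_add]
    | (k+3) =>
      intro _ hk2
      rw [show k+3 = (k+1)+2 from rfl, aeval_two_step,
        ih (k+2) (by omega) (by omega) (by omega),
        ih (k+1) (by omega) (by omega) (by omega)]
      have hk2n : k + 2 ≤ n := by omega
      have hk1n : k + 1 ≤ n := by omega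
      rw [if_pos hk2n, if_pos hk1n, pathT_een n (k+2) (by omega) hk2n]
      have e1 : k + 2 - 1 = k + 1 := by omega
      rw [if_pos (by omega : 2 ≤ k + 2), e1]
      have addself : ∀ x : ℕ → ZMod 2, x + x = 0 := by
        intro x; funext t; exact CharTwo.add_self_eq_zero _
      rw [show k+2+1 = k+3 from rfl, add_comm (een (k+1)), add_assoc, addself, add_zero]


lemma aeval_comm (n : ℕ) (p q : Polynomial (ZMod 2)) (v : ℕ → ZMod 2) :
    aeval (pathT n) p (aeval (pathT n) q v) = aeval (pathT n) q (aeval (pathT n) p v) := by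
  have : aeval (pathT n) p * aeval (pathT n) q = aeval (pathT n) q * aeval (pathT n) p := by
    rw [← map_mul, ← map_mul, mul_comm]
  calc aeval (pathT n) p (aeval (pathT n) q v)
      = (aeval (pathT n) p * aeval (pathT n) q) v := rfl
    _ = (aeval (pathT n) q * aeval (pathT n) p) v := by rw [this]
    _ = _ := rfl

lemma aeval_fpoly_top (n : ℕ) (hn : 1 ≤ n) (j : ℕ) (hj1 : 1 ≤ j) (hj2 : j ≤ n) :
    aeval (pathT n) (fpoly (n+1)) (een j) = 0 := by
  have hj : een j = aeval (pathT n) (fpoly j) (een 1) := by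
    rw [aeval_fpoly_een n hn j hj1 (by omega), if_pos hj2]
  rw [hj, aeval_comm, aeval_fpoly_een n hn (n+1) (by omega) (by omega),
    if_neg (by omega), map_zero]

lemma supported_eq_sum (n : ℕ) (v : ℕ → ZMod 2) (hv : ∀ k, v k ≠ 0 → 1 ≤ k ∧ k ≤ n) :
    v = ∑ j ∈ Finset.range n, v (j+1) • een (j+1) := by
  funext k
  rw [Finset.sum_apply]
  by_cases hk : 1 ≤ k ∧ k ≤ n
  · rw [Finset.sum_eq_single (k-1)]
    · simp [een, show k - 1 + 1 = k from by omega]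
    · intro b _ hb
      simp only [Pi.smul_apply, een, smul_eq_mul]
      rw [if_neg (by omega), mul_zero]
    · intro hb; exfalso; apply hb; rw [Finset.mem_range]; omega
  · have : v k = 0 := by by_contra h; exact hk (hv k h)
    rw [this]
    symm
    apply Finset.sum_eq_zero
    intro b hb
    rw [Finset.mem_range] at hb
    simp only [Pi.smul_apply, een, smul_eq_mul]
    rw [if_neg (by omega), mul_zero]

lemma aeval_fpoly_top_supported (n : ℕ) (hn : 1 ≤ n) (v : ℕ → ZMod 2)
    (hv : ∀ k, v k ≠ 0 → 1 ≤ k ∧ k ≤ n) :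
    aeval (pathT n) (fpoly (n+1)) v = 0 := by
  rw [supported_eq_sum n v hv, map_sum]
  apply Finset.sum_eq_zero
  intro j hj
  rw [map_smul, aeval_fpoly_top n hn (j+1) (by omega) (by rw [Finset.mem_range] at hj; omega)]
  simp

def gext (m n : ℕ) (x : Fin m × Fin n → ZMod 2) : ℕ → ℕ → ZMod 2 := fun i j =>
  if h : 1 ≤ i ∧ i ≤ m ∧ 1 ≤ j ∧ j ≤ n then x (⟨i-1, by omega⟩, ⟨j-1, by omega⟩) else 0

noncomputable def nbrSum (m n : ℕ) (x : Fin m × Fin n → ZMod 2) (p : Fin m × Fin n) : ZMod 2 :=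
  ∑ w, if (gridGraph m n).Adj p w then x w else 0

lemma ite_adj_split (m n : ℕ) (p w : Fin m × Fin n) (x : Fin m × Fin n → ZMod 2) :
    (if (gridGraph m n).Adj p w then x w else 0)
      = (if w.1.val + 1 = p.1.val ∧ w.2.val = p.2.val then x w else 0)
      + (if w.1.val = p.1.val + 1 ∧ w.2.val = p.2.val then x w else 0)
      + (if w.1.val = p.1.val ∧ w.2.val + 1 = p.2.val then x w else 0)
      + (if w.1.val = p.1.val ∧ w.2.val = p.2.val + 1 then x w else 0) := by
  have h1 := p.1.isLt; have h2 := p.2.isLt; have h3 := w.1.isLt; have h4 := w.2.isLt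
  show (if ((p.1.val : ℤ) - w.1.val).natAbs + ((p.2.val : ℤ) - w.2.val).natAbs = 1 then x w else 0) = _
  split_ifs <;> first | (exfalso; omega) | simp

lemma sum_cond_single (m n : ℕ) (x : Fin m × Fin n → ZMod 2) (P : Fin m × Fin n → Prop)
    [DecidablePred P] (i j : ℕ)
    (h : ∀ w, P w ↔ (1 ≤ i ∧ i ≤ m ∧ 1 ≤ j ∧ j ≤ n) ∧ w.1.val = i - 1 ∧ w.2.val = j - 1) :
    ∑ w, (if P w then x w else 0) = gext m n x i j := by
  by_cases hr : 1 ≤ i ∧ i ≤ m ∧ 1 ≤ j ∧ j ≤ n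
  · set w₀ : Fin m × Fin n := (⟨i-1, by omega⟩, ⟨j-1, by omega⟩) with hw₀
    have he : ∀ w, P w ↔ w = w₀ := by
      intro w
      rw [h, hw₀, Prod.ext_iff, Fin.ext_iff, Fin.ext_iff]
      simp only [hr, true_and]
    calc ∑ w, (if P w then x w else 0) = ∑ w, (if w = w₀ then x w else 0) := by
          apply Finset.sum_congr rfl; intro w _; rw [if_congr (he w) rfl rfl]
      _ = x w₀ := by rw [Finset.sum_ite_eq']; simp
      _ = gext m n x i j := by rw [gext, dif_pos hr]
  · rw [gext, dif_neg hr]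
    apply Finset.sum_eq_zero
    intro w _
    rw [if_neg]
    rw [h]
    tauto

lemma nbrSum_eq_gext (m n : ℕ) (x : Fin m × Fin n → ZMod 2) (p : Fin m × Fin n) :
    nbrSum m n x p = gext m n x (p.1.val) (p.2.val+1) + gext m n x (p.1.val+2) (p.2.val+1)
      + gext m n x (p.1.val+1) (p.2.val) + gext m n x (p.1.val+1) (p.2.val+2) := by
  have h1 := p.1.isLt; have h2 := p.2.isLt
  rw [nbrSum]
  rw [Finset.sum_congr rfl (fun w _ => ite_adj_split m n p w x)]
  rw [Finset.sum_add_distrib, Finset.sum_add_distrib, Finset.sum_add_distrib]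
  rw [sum_cond_single m n x _ (p.1.val) (p.2.val+1)
      (by intro w; have := w.1.isLt; have := w.2.isLt; constructor <;> intro hh <;>
          [refine ⟨by omega, by omega, by omega⟩; exact ⟨by omega, by omega⟩]),
    sum_cond_single m n x _ (p.1.val+2) (p.2.val+1)
      (by intro w; have := w.1.isLt; have := w.2.isLt; constructor <;> intro hh <;>
          [refine ⟨by omega, by omega, by omega⟩; exact ⟨by omega, by omega⟩]),
    sum_cond_single m n x _ (p.1.val+1) (p.2.val)
      (by intro w; have := w.1.isLt; have := w.2.isLt; constructor <;> intro hh <;>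
          [refine ⟨by omega, by omega, by omega⟩; exact ⟨by omega, by omega⟩]),
    sum_cond_single m n x _ (p.1.val+1) (p.2.val+2)
      (by intro w; have := w.1.isLt; have := w.2.isLt; constructor <;> intro hh <;>
          [refine ⟨by omega, by omega, by omega⟩; exact ⟨by omega, by omega⟩])]
-- appended to base
lemma grid_ker_vanish_row (m n : ℕ) (hm : 1 ≤ m) (hn : 1 ≤ n) (z : Fin m × Fin n → ZMod 2)
    (hz : ∀ p, nbrSum m n z p = 0) (p : Fin m × Fin n)
    (hdvd : Nat.gcd (m+1) (n+1) ∣ (p.1.val + 1)) : z p = 0 := by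
  set R : ℕ → (ℕ → ZMod 2) := fun i j => gext m n z i j with hR
  have hz' : ∀ i j, 1 ≤ i → i ≤ m → 1 ≤ j → j ≤ n →
      R (i-1) j + R (i+1) j + R i (j-1) + R i (j+1) = 0 := by
    intro i j hi1 hi2 hj1 hj2
    have h := hz (⟨i-1, by omega⟩, ⟨j-1, by omega⟩)
    rw [nbrSum_eq_gext] at h
    simp only at h
    rw [show i - 1 + 2 = i + 1 from by omega, show i - 1 + 1 = i from by omega,
      show j - 1 + 1 = j from by omega, show j - 1 + 2 = j + 1 from by omega] at h
    exact h
  have hR0 : R 0 = 0 := by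
    funext j; rw [hR]; simp only; rw [gext, dif_neg (by omega)]; rfl
  have hRtop : R (m+1) = 0 := by
    funext j; rw [hR]; simp only; rw [gext, dif_neg (by omega)]; rfl
  have hRsupp : ∀ k, R 1 k ≠ 0 → 1 ≤ k ∧ k ≤ n := by
    intro k hk
    by_contra hc
    apply hk
    rw [hR]; simp only; rw [gext, dif_neg (by omega)]
  -- R i = fpoly i (pathT n) (R 1) for i ≤ m+1
  have claim : ∀ i, i ≤ m + 1 → R i = Polynomial.aeval (pathT n) (fpoly i) (R 1) := by
    intro i
    induction i using Nat.strong_induction_on with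
    | _ i ih =>
      match i with
      | 0 => intro _; rw [show fpoly 0 = 0 from rfl, map_zero]; exact hR0.trans rfl
      | 1 => intro _; rw [show fpoly 1 = 1 from rfl, map_one]; rfl
      | (i+2) =>
        intro hle
        rw [aeval_two_step, ← ih (i+1) (by omega) (by omega), ← ih i (by omega) (by omega)]
        funext j
        by_cases hj : 1 ≤ j ∧ j ≤ n
        · have hkey := hz' (i+1) j (by omega) (by omega) hj.1 hj.2
          rw [show i + 1 - 1 = i from by omega, show i + 1 + 1 = i + 2 from rfl] at hkey
          simp only [Pi.add_apply]
          rw [pathT_apply, if_pos hj]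
          have hsum : R (i+2) j + (R (i+1) (j-1) + R (i+1) (j+1) + R i j) = 0 := by
            linear_combination hkey
          have hchar : ∀ x y : ZMod 2, x + y = 0 → x = y := by decide
          exact hchar _ _ hsum
        · have h1 : R (i+2) j = 0 := by rw [hR]; simp only; rw [gext, dif_neg (by omega)]
          have h2 : R i j = 0 := by rw [hR]; simp only; rw [gext, dif_neg (by omega)]
          simp only [Pi.add_apply]
          rw [pathT_apply, if_neg hj, h1, h2, add_zero]
  have htopm : Polynomial.aeval (pathT n) (fpoly (m+1)) (R 1) = 0 := by
    rw [← claim (m+1) le_rfl]; exact hRtop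
  have htopn : Polynomial.aeval (pathT n) (fpoly (n+1)) (R 1) = 0 :=
    aeval_fpoly_top_supported n hn (R 1) hRsupp
  obtain ⟨α, β, hbez⟩ := fpoly_bezout (m+1) (n+1)
  have hgcd : Polynomial.aeval (pathT n) (fpoly (Nat.gcd (m+1) (n+1))) (R 1) = 0 := by
    rw [hbez, map_add, map_mul, map_mul]
    show Polynomial.aeval (pathT n) α (Polynomial.aeval (pathT n) (fpoly (m+1)) (R 1))
      + Polynomial.aeval (pathT n) β (Polynomial.aeval (pathT n) (fpoly (n+1)) (R 1)) = 0
    rw [htopm, htopn, map_zero, map_zero, add_zero]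
  obtain ⟨c, hc⟩ := fpoly_dvd hdvd
  have hRa : R (p.1.val + 1) = 0 := by
    rw [claim (p.1.val+1) (by have := p.1.isLt; omega), hc, mul_comm, map_mul]
    show Polynomial.aeval (pathT n) c (Polynomial.aeval (pathT n)
      (fpoly (Nat.gcd (m+1) (n+1))) (R 1)) = 0
    rw [hgcd, map_zero]
  have hzp : z p = R (p.1.val+1) (p.2.val+1) := by
    rw [hR]; simp only
    rw [gext, dif_pos (by have := p.1.isLt; have := p.2.isLt; omega)]
    congr 1
  rw [hzp, hRa]
  rfl

lemma grid_ker_vanish_col (m n : ℕ) (hm : 1 ≤ m) (hn : 1 ≤ n) (z : Fin m × Fin n → ZMod 2)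
    (hz : ∀ p, nbrSum m n z p = 0) (p : Fin m × Fin n)
    (hdvd : Nat.gcd (m+1) (n+1) ∣ (p.2.val + 1)) : z p = 0 := by
  have hge : ∀ i j, gext n m (fun q => z (q.2, q.1)) i j = gext m n z j i := by
    intro i j
    rw [gext, gext]
    by_cases hij : 1 ≤ i ∧ i ≤ n ∧ 1 ≤ j ∧ j ≤ m
    · rw [dif_pos hij, dif_pos (by omega)]
    · rw [dif_neg hij, dif_neg (by omega)]
  have hker : ∀ q, nbrSum n m (fun q => z (q.2, q.1)) q = 0 := by
    intro q
    rw [nbrSum_eq_gext]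
    have h := hz (q.2, q.1)
    rw [nbrSum_eq_gext] at h
    simp only at h
    rw [hge, hge, hge, hge]
    linear_combination h
  have := grid_ker_vanish_row n m hn hm _ hker (p.2, p.1) (by rw [Nat.gcd_comm]; exact hdvd)
  exact this

noncomputable def nbrL (m n : ℕ) :
    (Fin m × Fin n → ZMod 2) →ₗ[ZMod 2] (Fin m × Fin n → ZMod 2) where
  toFun x := nbrSum m n x
  map_add' x y := by
    funext p
    simp only [nbrSum, Pi.add_apply, ← Finset.sum_add_distrib]
    apply Finset.sum_congr rfl
    intro w _
    split_ifs <;> simp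
  map_smul' c x := by
    funext p
    simp only [nbrSum, Pi.smul_apply, RingHom.id_apply, Finset.smul_sum]
    apply Finset.sum_congr rfl
    intro w _
    split_ifs <;> simp

lemma nbrSum_single (m n : ℕ) (p q : Fin m × Fin n) :
    nbrSum m n (Pi.single p 1) q = if (gridGraph m n).Adj q p then 1 else 0 := by
  rw [nbrSum]
  have : ∀ w, (if (gridGraph m n).Adj q w then (Pi.single p 1 : Fin m × Fin n → ZMod 2) w else 0)
      = if w = p then (if (gridGraph m n).Adj q p then 1 else 0) else 0 := by
    intro w
    by_cases hw : w = p
    · subst hw; simp [Pi.single_apply]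
    · simp [Pi.single_apply, hw]
  rw [Finset.sum_congr rfl (fun w _ => this w), Finset.sum_ite_eq']
  simp

lemma exists_nbr_solution (m n : ℕ) (hm : 1 ≤ m) (hn : 1 ≤ n) (u : Fin m × Fin n)
    (hu : Nat.gcd (m+1) (n+1) ∣ (u.1.val + 1) ∨ Nat.gcd (m+1) (n+1) ∣ (u.2.val + 1)) :
    ∃ x, ∀ p, nbrSum m n x p = if p = u then 1 else 0 := by
  set eu : Fin m × Fin n → ZMod 2 := fun p => if p = u then 1 else 0 with heu_def
  by_cases hmem : eu ∈ LinearMap.range (nbrL m n)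
  · obtain ⟨x, hx⟩ := hmem
    exact ⟨x, fun p => congrFun hx p⟩
  · exfalso
    set K := LinearMap.range (nbrL m n) with hK
    have hq : K.mkQ eu ≠ 0 := by
      rw [Ne, Submodule.mkQ_apply, Submodule.Quotient.mk_eq_zero]; exact hmem
    obtain ⟨g, hg⟩ : ∃ g : Module.Dual (ZMod 2) (_ ⧸ K), g (K.mkQ eu) ≠ 0 := by
      by_contra hall
      push_neg at hall
      exact hq ((Module.forall_dual_apply_eq_zero_iff (ZMod 2) _).mp hall)
    set f : Module.Dual (ZMod 2) (Fin m × Fin n → ZMod 2) := g.comp K.mkQ with hf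
    set y : Fin m × Fin n → ZMod 2 := fun q => f (Pi.single q 1) with hy
    have hrange : ∀ x, f (nbrL m n x) = 0 := by
      intro x
      show g (K.mkQ (nbrL m n x)) = 0
      rw [Submodule.mkQ_apply, (Submodule.Quotient.mk_eq_zero _).mpr
        (LinearMap.mem_range_self _ x), map_zero]
    have hfx : ∀ x, f x = ∑ q, x q * y q := by
      intro x
      conv_lhs => rw [← Finset.univ_sum_single x]
      rw [map_sum]
      apply Finset.sum_congr rfl
      intro q _
      have hsingle : Pi.single q (x q) = x q • (Pi.single q 1 : Fin m × Fin n → ZMod 2) := by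
        funext r
        rcases eq_or_ne r q with rfl | hr
        · simp
        · simp [Pi.single_apply, hr]
      rw [hsingle, map_smul, smul_eq_mul]
    have hker : ∀ p, nbrSum m n y p = 0 := by
      intro p
      have h1 : nbrSum m n y p = ∑ q, nbrSum m n (Pi.single p 1) q * y q := by
        rw [nbrSum]
        apply Finset.sum_congr rfl
        intro w _
        rw [nbrSum_single]
        by_cases h : (gridGraph m n).Adj p w
        · rw [if_pos h, if_pos h.symm, one_mul]
        · rw [if_neg h, if_neg (fun hc => h hc.symm), zero_mul]
      rw [h1, ← hfx (nbrSum m n (Pi.single p 1))]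
      exact hrange (Pi.single p 1)
    have hyu : y u = 0 := by
      rcases hu with h | h
      · exact grid_ker_vanish_row m n hm hn y hker u h
      · exact grid_ker_vanish_col m n hm hn y hker u h
    apply hg
    show f eu = 0
    rw [hfx eu]
    have : ∀ q, eu q * y q = if q = u then y q else 0 := by
      intro q
      show (if q = u then (1 : ZMod 2) else 0) * y q = _
      by_cases h : q = u
      · rw [if_pos h, if_pos h, one_mul]
      · rw [if_neg h, if_neg h, zero_mul]
    rw [Finset.sum_congr rfl (fun q _ => this q), Finset.sum_ite_eq']
    simp [hyu]

lemma adj_parity (m n : ℕ) (p w : Fin m × Fin n) (h : (gridGraph m n).Adj p w) :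
    (p.1.val + p.2.val) % 2 ≠ (w.1.val + w.2.val) % 2 := by
  simp only [gridGraph] at h
  omega

lemma zmod2_ne_zero (a : ZMod 2) (h : a ≠ 0) : a = 1 := by revert a; decide

lemma zmod2_ne_one (a : ZMod 2) (h : a ≠ 1) : a = 0 := by revert a; decide


/-- For `m, n ≥ 1`, `d = gcd(m+1, n+1)` and a vertex `u = (a,b)` of the
grid graph `G_{m×n}` (with `a = u.1.val + 1`, `b = u.2.val + 1`) such that `d ∣ a` or
`d ∣ b`, there is a vertex `v` adjacent to `u` such that the graph `G_{m×n} - uv`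
(with the single edge `uv` deleted) has an even kernel containing `v`. -/
theorem grid_exists_move_evenKernel (m n : ℕ) (hm : 1 ≤ m) (hn : 1 ≤ n)
    (d : ℕ) (hd : d = Nat.gcd (m + 1) (n + 1)) (u : Fin m × Fin n)
    (h : d ∣ (u.1.val + 1) ∨ d ∣ (u.2.val + 1)) :
    ∃ v : Fin m × Fin n, (gridGraph m n).Adj u v ∧
      ∃ S : Set (Fin m × Fin n),
        IsEvenKernel ((gridGraph m n).deleteEdges {s(u, v)}) S ∧ v ∈ S := by
  classical
  subst hd
  obtain ⟨x₀, hx₀⟩ := exists_nbr_solution m n hm hn u h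
  set c := (u.1.val + u.2.val) % 2 with hc
  set x : Fin m × Fin n → ZMod 2 :=
    fun p => if (p.1.val + p.2.val) % 2 ≠ c then x₀ p else 0 with hxdef
  have hx : ∀ p, nbrSum m n x p = if p = u then 1 else 0 := by
    intro p
    by_cases hp : (p.1.val + p.2.val) % 2 = c
    · rw [← hx₀ p, nbrSum, nbrSum]
      apply Finset.sum_congr rfl
      intro w _
      by_cases hadj : (gridGraph m n).Adj p w
      · rw [if_pos hadj, if_pos hadj, hxdef]
        simp only
        rw [if_pos (by have := adj_parity m n p w hadj; omega)]
      · rw [if_neg hadj, if_neg hadj]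
    · have hpu : p ≠ u := by
        intro hpu; rw [hpu] at hp; exact hp rfl
      rw [if_neg hpu, nbrSum]
      apply Finset.sum_eq_zero
      intro w _
      by_cases hadj : (gridGraph m n).Adj p w
      · rw [if_pos hadj, hxdef]
        simp only
        rw [if_neg (by have := adj_parity m n p w hadj; omega)]
      · rw [if_neg hadj]
  have hxu : x u = 0 := by
    rw [hxdef]; simp only; rw [if_neg (by omega)]
  have h1 : nbrSum m n x u = 1 := by rw [hx u, if_pos rfl]
  have hex : ∃ w, (if (gridGraph m n).Adj u w then x w else 0) ≠ 0 := by
    by_contra hno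
    push_neg at hno
    rw [nbrSum, Finset.sum_eq_zero (fun w _ => hno w)] at h1
    exact one_ne_zero h1.symm
  obtain ⟨v, hv⟩ := hex
  have hadj_uv : (gridGraph m n).Adj u v := by
    by_contra hc2; rw [if_neg hc2] at hv; exact hv rfl
  have hxv : x v = 1 := by
    rw [if_pos hadj_uv] at hv; exact zmod2_ne_zero _ hv
  have hmemS : ∀ p, x p = 1 → (p.1.val + p.2.val) % 2 ≠ c := by
    intro p hp1 hcc
    rw [hxdef] at hp1
    simp only at hp1
    rw [if_neg (by omega)] at hp1
    exact absurd hp1 (by decide)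
  set G' := (gridGraph m n).deleteEdges {s(u, v)} with hG'
  have hadj' : ∀ p w, G'.Adj p w ↔
      (gridGraph m n).Adj p w ∧ ¬((p = u ∧ w = v) ∨ (p = v ∧ w = u)) := by
    intro p w
    rw [hG', SimpleGraph.deleteEdges_adj, Set.mem_singleton_iff, Sym2.eq_iff]
  -- cast-parity helper
  have hparity : ∀ (p : Fin m × Fin n), (∑ w, if x w = 1 ∧ G'.Adj p w then (1 : ZMod 2) else 0) = 0 →
      Even {w | w ∈ {q | x q = 1} ∧ G'.Adj p w}.ncard := by
    intro p hsum
    have hset : {w | w ∈ {q | x q = 1} ∧ G'.Adj p w}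
        = ↑(Finset.univ.filter (fun w => x w = 1 ∧ G'.Adj p w)) := by
      ext w; simp
    rw [hset, Set.ncard_coe_finset]
    rw [even_iff_two_dvd, ← ZMod.natCast_eq_zero_iff]
    rw [Finset.card_filter]
    push_cast
    convert hsum using 2 with w
  refine ⟨v, hadj_uv, {q | x q = 1}, ⟨⟨v, hxv⟩, ?_, ?_⟩, hxv⟩
  · -- independence
    intro a ha b hb hAdj
    rw [hadj'] at hAdj
    have h1 := hmemS a ha
    have h2 := hmemS b hb
    have := adj_parity m n a b hAdj.1
    omega
  · intro p hpS
    apply hparity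
    have hterm : ∀ w, (if x w = 1 ∧ G'.Adj p w then (1 : ZMod 2) else 0)
        = if G'.Adj p w then x w else 0 := by
      intro w
      by_cases hA : G'.Adj p w
      · by_cases hx1 : x w = 1
        · rw [if_pos ⟨hx1, hA⟩, if_pos hA, hx1]
        · rw [if_neg (fun hh => hx1 hh.1), if_pos hA, zmod2_ne_one _ hx1]
      · rw [if_neg (fun hh => hA hh.2), if_neg hA]
    rw [Finset.sum_congr rfl (fun w _ => hterm w)]
    by_cases hpu : p = u
    · subst hpu
      have hterm2 : ∀ w, (if G'.Adj p w then x w else 0)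
          = (if (gridGraph m n).Adj p w then x w else 0) + (if w = v then 1 else 0) := by
        intro w
        by_cases hwv : w = v
        · subst hwv
          rw [if_pos rfl, if_neg (by rw [hadj']; tauto), if_pos hadj_uv, hxv]
          decide
        · rw [if_neg hwv, add_zero]
          have : G'.Adj p w ↔ (gridGraph m n).Adj p w := by
            rw [hadj']
            constructor
            · exact fun hh => hh.1
            · intro hh
              refine ⟨hh, ?_⟩
              rintro (⟨-, rfl⟩ | ⟨rfl, rfl⟩)
              · exact hwv rfl
              · exact hadj_uv.ne rfl
          rw [if_congr this rfl rfl]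
      rw [Finset.sum_congr rfl (fun w _ => hterm2 w), Finset.sum_add_distrib]
      have hs1 : (∑ w, if (gridGraph m n).Adj p w then x w else 0) = 1 := by
        rw [← nbrSum, hx, if_pos rfl]
      have hs2 : (∑ w : Fin m × Fin n, if w = v then (1 : ZMod 2) else 0) = 1 := by
        rw [Finset.sum_ite_eq']; simp
      rw [hs1, hs2]
      decide
    · have hterm2 : ∀ w, (if G'.Adj p w then x w else 0)
          = (if (gridGraph m n).Adj p w then x w else 0) := by
        intro w
        by_cases hA : (gridGraph m n).Adj p w
        · by_cases hdel : (p = u ∧ w = v) ∨ (p = v ∧ w = u)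
          · rcases hdel with ⟨hpu', -⟩ | ⟨rfl, rfl⟩
            · exact absurd hpu' hpu
            · rw [if_neg (by rw [hadj']; tauto), if_pos hA, hxu]
          · rw [if_pos (by rw [hadj']; exact ⟨hA, hdel⟩), if_pos hA]
        · rw [if_neg (by rw [hadj']; tauto), if_neg hA]
      rw [Finset.sum_congr rfl (fun w _ => hterm2 w), ← nbrSum, hx, if_neg hpu]
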